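/- arXiv:1904.05213 — 3 statements merged into one kernel-verified Lean document; each statement's English description precedes it below -/
import Mathlib

section
/- Let q be a prime power and let k, m, l be positive integers with k ≥ m + l. Let V be a k-dimensional vector space over F_q and let L be a fixed (l−1)-dimensional subspace of V. Then the number of (m+1)-element sets {U_1, U_2, …, U_{m+1}} of l-dimensional subspaces of V, each containing L, such that dim(U_1 + U_2 + ⋯ + U_{m+1}) = m + l, equals (q^{m(m+1)/2}/(m+1)!) · ∏_{i=0}^{m} (q^{k−l+1−i} − 1)/(q − 1). -/
open Module Submodule

section Helpers

variable {F V W : Type*} [Field F] [AddCommGroup V] [Module F V]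
  [AddCommGroup W] [Module F W]

lemma mapFinsetSup (g : V →ₗ[F] W) (s : Finset (Submodule F V)) :
    Submodule.map g (s.sup id) = s.sup fun U => U.map g := by
  classical
  induction s using Finset.induction_on with
  | empty => simp
  | insert a s h ih => simp [Submodule.map_sup, ih]

lemma finrankMapMkQAdd [FiniteDimensional F V] (L U : Submodule F V) (h : L ≤ U) :
    finrank F ↥(U.map L.mkQ) + finrank F ↥L = finrank F ↥U := by
  have h1 := LinearMap.finrank_range_add_finrank_ker (L.mkQ.domRestrict U)
  rw [LinearMap.range_domRestrict, LinearMap.ker_domRestrict, Submodule.ker_mkQ] at h1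
  rwa [(Submodule.comapSubtypeEquivOfLe h).finrank_eq] at h1

end Helpers

section Count
set_option linter.unusedSectionVars false
set_option maxHeartbeats 800000

variable {F W : Type*} [Field F] [Fintype F] [AddCommGroup W] [Module F W]
  [FiniteDimensional F W] [DecidableEq (Submodule F W)]

lemma spansInjective {m : ℕ} {v : Fin m → W} (hv : LinearIndependent F v) :
    Function.Injective fun i => Submodule.span F {v i} := by
  intro i j hij
  have hij' : Submodule.span F {v i} = Submodule.span F {v j} := hij
  by_contra hne
  have h1 : v j ∉ Submodule.span F (v '' ({i} : Set (Fin m))) :=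
    hv.notMem_span_image (by simpa using Ne.symm hne)
  rw [Set.image_singleton, hij'] at h1
  exact h1 (Submodule.mem_span_singleton_self _)

lemma li_iff {m : ℕ} (v : Fin (m + 1) → W) :
    LinearIndependent F v ↔
      ((Finset.univ.image fun i => Submodule.span F {v i}).card = m + 1 ∧
       (∀ u ∈ Finset.univ.image fun i => Submodule.span F {v i}, finrank F ↥u = 1) ∧
       finrank F ↥((Finset.univ.image fun i => Submodule.span F {v i}).sup id) = m + 1) := by
  have hsup : ((Finset.univ.image fun i => Submodule.span F {v i}).sup id)
      = Submodule.span F (Set.range v) := by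
    rw [Finset.sup_image, Function.id_comp, Finset.sup_univ_eq_iSup,
      Submodule.span_range_eq_iSup]
  constructor
  · intro hv
    refine ⟨?_, ?_, ?_⟩
    · rw [Finset.card_image_of_injective _ (spansInjective hv), Finset.card_univ,
        Fintype.card_fin]
    · rintro u hu
      obtain ⟨i, -, rfl⟩ := Finset.mem_image.mp hu
      exact finrank_span_singleton (hv.ne_zero i)
    · rw [hsup, finrank_span_eq_card hv, Fintype.card_fin]
  · rintro ⟨-, -, h3⟩
    rw [linearIndependent_iff_card_eq_finrank_span]
    rw [hsup] at h3
    simp [Set.finrank, h3]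

lemma spanEqOfMem {u : Submodule F W} (hu : finrank F ↥u = 1) {x : W}
    (hx : x ∈ u) (hx0 : x ≠ 0) : Submodule.span F {x} = u :=
  Submodule.eq_of_le_of_finrank_le ((Submodule.span_singleton_le_iff_mem x u).mpr hx)
    (by rw [finrank_span_singleton hx0, hu])

lemma fiberCard {m : ℕ} (t : Finset (Submodule F W)) (ht1 : t.card = m + 1)
    (ht2 : ∀ u ∈ t, finrank F ↥u = 1)
    (ht3 : finrank F ↥(t.sup id) = m + 1) :
    Nat.card {v : Fin (m + 1) → W //
        (Finset.univ.image fun i => Submodule.span F {v i}) = t}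
      = Nat.factorial (m + 1) * (Fintype.card F - 1) ^ (m + 1) := by
  classical
  haveI : Finite W := Module.finite_of_finite F
  haveI := Fintype.ofFinite W
  set D := (Fin (m + 1) ≃ {u // u ∈ t}) ×
      ((u : {u // u ∈ t}) → {x : W // x ∈ (u : Submodule F W) ∧ x ≠ 0}) with hD
  let ψ : D → {v : Fin (m + 1) → W //
      (Finset.univ.image fun i => Submodule.span F {v i}) = t} := fun p =>
    ⟨fun i => (p.2 (p.1 i)).1, by
      have he : ∀ i, Submodule.span F {(p.2 (p.1 i)).1} = ((p.1 i : Submodule F W)) :=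
        fun i => spanEqOfMem (ht2 _ (p.1 i).2) (p.2 (p.1 i)).2.1 (p.2 (p.1 i)).2.2
      calc Finset.univ.image (fun i => Submodule.span F {(p.2 (p.1 i)).1})
          = Finset.univ.image (fun i => ((p.1 i : Submodule F W))) :=
            Finset.image_congr fun i _ => he i
        _ = Finset.image Subtype.val (Finset.univ.image p.1) :=
            (Finset.image_image).symm
        _ = Finset.image Subtype.val Finset.univ := by
            rw [Finset.image_univ_of_surjective p.1.surjective]
        _ = t := by rw [Finset.univ_eq_attach, Finset.attach_image_val]⟩
  have hψbij : Function.Bijective ψ := by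
    constructor
    · rintro ⟨e, w⟩ ⟨e', w'⟩ h
      have hv : ∀ i, (w (e i)).1 = (w' (e' i)).1 := fun i =>
        congrFun (congrArg Subtype.val h) i
      have hee : e = e' := by
        apply Equiv.ext
        intro i
        apply Subtype.ext
        rw [← spanEqOfMem (ht2 _ (e i).2) (w (e i)).2.1 (w (e i)).2.2,
          ← spanEqOfMem (ht2 _ (e' i).2) (w' (e' i)).2.1 (w' (e' i)).2.2, hv i]
      subst hee
      refine Prod.ext rfl ?_
      funext u
      apply Subtype.ext
      have := hv (e.symm u)
      rwa [e.apply_symm_apply] at this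
    · rintro ⟨v, hv⟩
      have hLI : LinearIndependent F v := (li_iff v).mpr
        ⟨by rw [hv]; exact ht1, by rw [hv]; exact ht2, by rw [hv]; exact ht3⟩
      let e0 : Fin (m + 1) → {u // u ∈ t} := fun i =>
        ⟨Submodule.span F {v i}, hv ▸ Finset.mem_image_of_mem _ (Finset.mem_univ i)⟩
      have he0inj : Function.Injective e0 := fun i j hij =>
        spansInjective hLI (congrArg Subtype.val hij)
      have he0bij : Function.Bijective e0 :=
        (Fintype.bijective_iff_injective_and_card e0).mpr
          ⟨he0inj, by simp [Fintype.card_coe, ht1]⟩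
      let e := Equiv.ofBijective e0 he0bij
      have hespan : ∀ u : {u // u ∈ t},
          Submodule.span F {v (e.symm u)} = (u : Submodule F W) := by
        intro u
        have h := congrArg Subtype.val (e.apply_symm_apply u)
        exact h
      refine ⟨⟨e, fun u => ⟨v (e.symm u), ?_, hLI.ne_zero _⟩⟩, ?_⟩
      · rw [← hespan u]
        exact Submodule.mem_span_singleton_self _
      · apply Subtype.ext
        funext i
        show v (e.symm (e i)) = v i
        rw [Equiv.symm_apply_apply]
  rw [← Nat.card_congr (Equiv.ofBijective ψ hψbij)]
  have hcard_t : Fintype.card {u // u ∈ t} = m + 1 := by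
    rw [Fintype.card_coe, ht1]
  rw [hD, Nat.card_eq_fintype_card, Fintype.card_prod, Fintype.card_equiv
    (Fintype.equivOfCardEq (by simp [hcard_t]))]
  have hline : ∀ u : {u // u ∈ t},
      Fintype.card {x : W // x ∈ (u : Submodule F W) ∧ x ≠ 0} = Fintype.card F - 1 := by
    intro u
    have e1 : {x : W // x ∈ (u : Submodule F W) ∧ x ≠ 0} ≃
        {y : ↥(u : Submodule F W) // ¬ y = 0} :=
      { toFun := fun x => ⟨⟨x.1, x.2.1⟩, by
          simp only [Submodule.mk_eq_zero]
          exact x.2.2⟩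
        invFun := fun y => ⟨y.1.1, y.1.2, by
          intro h
          exact y.2 (Subtype.ext h)⟩
        left_inv := fun x => rfl
        right_inv := fun y => rfl }
    rw [Fintype.card_congr e1, Fintype.card_subtype_compl, Fintype.card_subtype_eq,
      card_eq_pow_finrank (K := F), ht2 _ u.2, pow_one]
  rw [Fintype.card_pi]
  simp only [hline]
  rw [Finset.prod_const, Finset.card_univ, hcard_t, Fintype.card_fin]

lemma countLineSets (m : ℕ) (hm : m + 1 ≤ finrank F W) :
    Set.ncard {t : Finset (Submodule F W) | t.card = m + 1 ∧
        (∀ u ∈ t, finrank F ↥u = 1) ∧ finrank F ↥(t.sup id) = m + 1}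
      * Nat.factorial (m + 1) * (Fintype.card F - 1) ^ (m + 1)
      = ∏ i ∈ Finset.range (m + 1),
        (Fintype.card F ^ finrank F W - Fintype.card F ^ i) := by
  classical
  haveI : Finite W := Module.finite_of_finite F
  haveI := Fintype.ofFinite W
  haveI : Finite (Submodule F W) :=
    Finite.of_injective (fun u : Submodule F W => (u : Set W)) fun u u' h =>
      SetLike.ext' h
  haveI := Fintype.ofFinite (Submodule F W)
  set P : Finset (Submodule F W) → Prop := fun t => t.card = m + 1 ∧
      (∀ u ∈ t, finrank F ↥u = 1) ∧ finrank F ↥(t.sup id) = m + 1 with hP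
  set T : Finset (Finset (Submodule F W)) := Finset.univ.filter P with hT
  set Φ : (Fin (m + 1) → W) → Finset (Submodule F W) := fun v =>
    Finset.univ.image fun i => Submodule.span F {v i} with hΦ
  set A : Finset (Fin (m + 1) → W) :=
    Finset.univ.filter fun v => LinearIndependent F v with hA
  have hmem : ∀ v ∈ A, Φ v ∈ T := by
    intro v hv
    rw [hT, Finset.mem_filter]
    exact ⟨Finset.mem_univ _, (li_iff v).mp (by simpa [hA] using hv)⟩
  have hsum := Finset.card_eq_sum_card_fiberwise hmem
  have hfib : ∀ t ∈ T, (A.filter fun v => Φ v = t).card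
      = Nat.factorial (m + 1) * (Fintype.card F - 1) ^ (m + 1) := by
    intro t ht
    rw [hT, Finset.mem_filter] at ht
    obtain ⟨-, ht1, ht2, ht3⟩ := ht
    have heq : (A.filter fun v => Φ v = t) = Finset.univ.filter fun v => Φ v = t := by
      ext v
      simp only [hA, Finset.mem_filter, Finset.mem_univ, true_and]
      refine ⟨fun h => h.2, fun h => ⟨(li_iff v).mpr ?_, h⟩⟩
      replace h : (Finset.univ.image fun i => Submodule.span F {v i}) = t := h
      rw [h]
      exact ⟨ht1, ht2, ht3⟩
    rw [heq]
    have := fiberCard t ht1 ht2 ht3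
    rwa [Nat.card_eq_fintype_card, Fintype.card_subtype] at this
  have hAcard : A.card = ∏ i ∈ Finset.range (m + 1),
      (Fintype.card F ^ finrank F W - Fintype.card F ^ i) := by
    have := card_linearIndependent (K := F) (V := W) hm
    rw [Nat.card_eq_fintype_card, Fintype.card_subtype] at this
    rw [hA, this, ← Fin.prod_univ_eq_prod_range]
  have hTcard : Set.ncard {t : Finset (Submodule F W) | P t} = T.card := by
    rw [← Nat.card_coe_set_eq, Nat.card_eq_fintype_card, hT]
    simp [Fintype.card_subtype]
  rw [hsum, Finset.sum_congr rfl hfib, Finset.sum_const, smul_eq_mul] at hAcard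
  rw [← hAcard, hTcard, mul_assoc]

end Count

lemma prodArith (q m n : ℕ) (hn : m + 1 ≤ n) :
    ∏ i ∈ Finset.range (m + 1), (q ^ n - q ^ i)
      = q ^ (m * (m + 1) / 2) * ∏ i ∈ Finset.range (m + 1), (q ^ (n - i) - 1) := by
  have hfac : ∀ i ∈ Finset.range (m + 1), q ^ n - q ^ i = q ^ i * (q ^ (n - i) - 1) := by
    intro i hi
    rw [Finset.mem_range] at hi
    rw [Nat.mul_sub, mul_one, ← pow_add]
    congr 2
    omega
  rw [Finset.prod_congr rfl hfac, Finset.prod_mul_distrib,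
    Finset.prod_pow_eq_pow_sum, Finset.sum_range_id, Nat.add_sub_cancel,
    Nat.mul_comm (m + 1) m]

/-- In a `k`-dim space over `F_q` with a fixed `(l−1)`-dim subspace `L` and `k ≥ m + l`,
the number of `(m+1)`-element sets `{U_1,…,U_{m+1}}` of `l`-dim subspaces, each
containing `L`, with `dim(U_1 + ⋯ + U_{m+1}) = m + l`, equals
`(q^{m(m+1)/2}/(m+1)!) · ∏_{i=0}^{m} (q^{k−l+1−i} − 1)/(q − 1)`
(stated in cross-multiplied form). -/
theorem count_X_sets (q k m l : ℕ) (hq : IsPrimePow q)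
    (hm : 1 ≤ m) (hl : 1 ≤ l) (hk : m + l ≤ k)
    (F : Type*) [Field F] [Fintype F] (hF : Fintype.card F = q)
    (V : Type*) [AddCommGroup V] [Module F V] [FiniteDimensional F V]
    (hV : Module.finrank F V = k)
    (L : Submodule F V) (hL : Module.finrank F ↥L = l - 1) :
    Set.ncard {s : Finset (Submodule F V) | s.card = m + 1 ∧
        (∀ U ∈ s, Module.finrank F ↥U = l ∧ L ≤ U) ∧
        Module.finrank F ↥(s.sup id) = m + l}
      * Nat.factorial (m + 1) * (q - 1) ^ (m + 1)
      = q ^ (m * (m + 1) / 2) * ∏ i ∈ Finset.range (m + 1), (q ^ (k - l + 1 - i) - 1) := by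
  classical
  have hQ : Module.finrank F (V ⧸ L) = k - l + 1 := by
    have h := Submodule.finrank_quotient_add_finrank L
    rw [hV, hL] at h
    omega
  set S : Set (Finset (Submodule F V)) := {s : Finset (Submodule F V) | s.card = m + 1 ∧
        (∀ U ∈ s, Module.finrank F ↥U = l ∧ L ≤ U) ∧
        Module.finrank F ↥(s.sup id) = m + l} with hS
  set Tset : Set (Finset (Submodule F (V ⧸ L))) :=
    {t : Finset (Submodule F (V ⧸ L)) | t.card = m + 1 ∧
        (∀ u ∈ t, Module.finrank F ↥u = 1) ∧
        Module.finrank F ↥(t.sup id) = m + 1} with hTset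
  set f : Finset (Submodule F V) → Finset (Submodule F (V ⧸ L)) :=
    fun s => s.image (Submodule.map L.mkQ) with hf
  have hcm : ∀ U : Submodule F V, L ≤ U →
      Submodule.comap L.mkQ (Submodule.map L.mkQ U) = U := fun U h => by
    rw [Submodule.comap_map_mkQ, sup_eq_right.mpr h]
  have hmc : ∀ u : Submodule F (V ⧸ L),
      Submodule.map L.mkQ (Submodule.comap L.mkQ u) = u := fun u => by
    rw [Submodule.map_comap_eq, Submodule.range_mkQ, top_inf_eq]
  have hLle_comap : ∀ u : Submodule F (V ⧸ L), L ≤ Submodule.comap L.mkQ u := by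
    intro u x hx
    show L.mkQ x ∈ u
    have hx0 : L.mkQ x = 0 := by
      simpa [Submodule.mkQ_apply] using (Submodule.Quotient.mk_eq_zero L).mpr hx
    rw [hx0]
    exact u.zero_mem
  -- forward direction
  have hfor : ∀ s ∈ S, f s ∈ Tset := by
    intro s hs
    obtain ⟨hcard, hU, hsup⟩ := hs
    have hLle : ∀ U ∈ s, L ≤ U := fun U h => (hU U h).2
    have hinj_s : Set.InjOn (Submodule.map L.mkQ) ↑s := fun U h₁ U' h₂ h => by
      rw [← hcm U (hLle U h₁), h, hcm U' (hLle U' h₂)]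
    have hLsup : L ≤ s.sup id := by
      obtain ⟨U, hU'⟩ := Finset.card_pos.mp (by omega : 0 < s.card)
      exact le_trans (hLle U hU') (Finset.le_sup (f := id) hU')
    have hmapsup : Submodule.map L.mkQ (s.sup id) = (f s).sup id := by
      simp only [hf, mapFinsetSup, Finset.sup_image]
      rfl
    refine ⟨?_, ?_, ?_⟩
    · show (Finset.image (Submodule.map L.mkQ) s).card = m + 1
      rw [Finset.card_image_of_injOn hinj_s, hcard]
    · intro u hu
      obtain ⟨U, hU', rfl⟩ := Finset.mem_image.mp hu
      have h := finrankMapMkQAdd L U (hLle U hU')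
      rw [hL, (hU U hU').1] at h
      omega
    · have h := finrankMapMkQAdd L (s.sup id) hLsup
      rw [hL, hsup, hmapsup] at h
      omega
  -- backward direction
  have hback : ∀ t ∈ Tset, ∃ s ∈ S, f s = t := by
    intro t ht
    obtain ⟨ht1, ht2, ht3⟩ := ht
    refine ⟨t.image (Submodule.comap L.mkQ), ?_, ?_⟩
    swap
    · show Finset.image (Submodule.map L.mkQ) (Finset.image (Submodule.comap L.mkQ) t) = t
      rw [Finset.image_image,
        Finset.image_congr (f := Submodule.map L.mkQ ∘ Submodule.comap L.mkQ) (g := id)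
          fun u _ => hmc u,
        Finset.image_id]
    · set s := t.image (Submodule.comap L.mkQ) with hs'
      have hfs : f s = t := by
        show Finset.image (Submodule.map L.mkQ) (Finset.image (Submodule.comap L.mkQ) t) = t
        rw [Finset.image_image,
          Finset.image_congr (f := Submodule.map L.mkQ ∘ Submodule.comap L.mkQ) (g := id)
            fun u _ => hmc u,
          Finset.image_id]
      have hLle : ∀ U ∈ s, L ≤ U := by
        intro U hU'
        obtain ⟨u, hu, rfl⟩ := Finset.mem_image.mp hU'
        exact hLle_comap u
      have hscard : s.card = m + 1 := by
        have h1 : s.card ≤ t.card := Finset.card_image_le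
        have h2 : t.card ≤ s.card := by
          rw [← hfs, hf]
          exact Finset.card_image_le
        omega
      have hLsup : L ≤ s.sup id := by
        obtain ⟨U, hU'⟩ := Finset.card_pos.mp (by omega : 0 < s.card)
        exact le_trans (hLle U hU') (Finset.le_sup (f := id) hU')
      refine ⟨hscard, ?_, ?_⟩
      · intro U hU'
        obtain ⟨u, hu, rfl⟩ := Finset.mem_image.mp hU'
        refine ⟨?_, hLle_comap u⟩
        have h := finrankMapMkQAdd L (Submodule.comap L.mkQ u) (hLle_comap u)
        rw [hmc u, hL, ht2 u hu] at h
        omega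
      · have hmapsup : Submodule.map L.mkQ (s.sup id) = (f s).sup id := by
          simp only [hf, mapFinsetSup, Finset.sup_image]
          rfl
        have h := finrankMapMkQAdd L (s.sup id) hLsup
        rw [hmapsup, hfs, hL, ht3] at h
        omega
  have himg : f '' S = Tset :=
    Set.Subset.antisymm (by rintro t ⟨s, hs, rfl⟩; exact hfor s hs)
      (fun t ht => by obtain ⟨s, hs, hfs⟩ := hback t ht; exact ⟨s, hs, hfs⟩)
  have hinj : Set.InjOn f S := by
    intro s₁ h₁ s₂ h₂ h
    have e : ∀ s ∈ S, (f s).image (Submodule.comap L.mkQ) = s := by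
      intro s hs
      show Finset.image (Submodule.comap L.mkQ) (Finset.image (Submodule.map L.mkQ) s) = s
      rw [Finset.image_image,
        Finset.image_congr (f := Submodule.comap L.mkQ ∘ Submodule.map L.mkQ) (g := id)
          fun U hU => hcm U ((hs.2.1 U hU).2),
        Finset.image_id]
    rw [← e s₁ h₁, h, e s₂ h₂]
  have hcardeq : S.ncard = Tset.ncard := by
    rw [← himg, Set.ncard_image_of_injOn hinj]
  have hmain := countLineSets (F := F) (W := V ⧸ L) m (by omega)
  rw [hF, hQ] at hmain
  rw [hcardeq, hTset] at *
  rw [hmain, prodArith q m (k - l + 1) (by omega)]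
end

section
/- Let q be a prime power and let m_r, l_r, t_T, k_r be positive integers with k_r ≥ m_r + l_r + t_T. Let V be a k_r-dimensional vector space over F_q, let L be a fixed (l_r − 1)-dimensional subspace of V, and let Q be a fixed (m_r + l_r + 1)-dimensional subspace of V with L ⊆ Q. Then the number of (t_T − 1)-element sets {V_1, …, V_{t_T−1}} of l_r-dimensional subspaces of V, each containing L, such that dim(Q + V_1 + ⋯ + V_{t_T−1}) = m_r + l_r + t_T, equals (q^{(t_T + 2m_r + 2)(t_T − 1)/2}/(t_T − 1)!) · ∏_{i=1}^{t_T−1} (q^{k_r − m_r − l_r − i} − 1)/(q − 1). -/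
open Module Finset

section Aux

variable {F V : Type*} [Field F] [Fintype F] [AddCommGroup V] [Module F V]
  [FiniteDimensional F V]

omit [Fintype F] in
/-- If `W` covers `L` and `Y ⊇ L`, then `Y ⊔ W` has dimension at most `dim Y + 1`. -/
lemma aux_sup_dim_le (L Y W : Submodule F V) (hLY : L ≤ Y) (hLW : L ≤ W)
    (hW : finrank F ↥W = finrank F ↥L + 1) :
    finrank F ↥(Y ⊔ W) ≤ finrank F ↥Y + 1 := by
  have h := Submodule.finrank_sup_add_finrank_inf_eq Y W
  have hinf : finrank F ↥L ≤ finrank F ↥(Y ⊓ W) :=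
    Submodule.finrank_mono (le_inf hLY hLW)
  omega

omit [Fintype F] in
/-- If moreover `W ⊄ Y`, the dimension of `Y ⊔ W` is exactly `dim Y + 1`. -/
lemma aux_sup_dim_eq (L Y W : Submodule F V) (hLY : L ≤ Y) (hLW : L ≤ W)
    (hW : finrank F ↥W = finrank F ↥L + 1) (hnle : ¬ W ≤ Y) :
    finrank F ↥(Y ⊔ W) = finrank F ↥Y + 1 := by
  have h := Submodule.finrank_sup_add_finrank_inf_eq Y W
  have hlt : Y ⊓ W < W := lt_of_le_of_ne inf_le_right
    (fun he => hnle (he ▸ inf_le_left))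
  have hinflt : finrank F ↥(Y ⊓ W) < finrank F ↥W :=
    Submodule.finrank_lt_finrank_of_lt hlt
  have hinf : finrank F ↥L ≤ finrank F ↥(Y ⊓ W) :=
    Submodule.finrank_mono (le_inf hLY hLW)
  have hle : finrank F ↥Y ≤ finrank F ↥(Y ⊔ W) := Submodule.finrank_mono le_sup_left
  have h2 := aux_sup_dim_le L Y W hLY hLW hW
  omega

omit [Fintype F] in
/-- A finite family of covers of `L` increases dimension by at most the cardinality. -/
lemma aux_sup_card_le (L X : Submodule F V) (hLX : L ≤ X)
    (s : Finset (Submodule F V))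
    (hs : ∀ W ∈ s, finrank F ↥W = finrank F ↥L + 1 ∧ L ≤ W) :
    finrank F ↥(X ⊔ s.sup id) ≤ finrank F ↥X + s.card := by
  classical
  induction s using Finset.induction with
  | empty => rw [Finset.sup_empty, sup_bot_eq]; simp
  | @insert a s ha ih =>
    have hsup : X ⊔ (insert a s).sup id = (X ⊔ s.sup id) ⊔ a := by
      rw [Finset.sup_insert]
      simp only [id_eq]
      rw [sup_comm a _, ← sup_assoc]
    have h1 := aux_sup_dim_le L (X ⊔ s.sup id) a (le_trans hLX le_sup_left)
      (hs a (mem_insert_self a s)).2 (hs a (mem_insert_self a s)).1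
    have h2 := ih (fun W hW => hs W (mem_insert_of_mem hW))
    rw [hsup, Finset.card_insert_of_notMem ha]
    omega

omit [Fintype F] in
lemma aux_cover_props (L : Submodule F V) {v : V} (hv : v ∉ L) :
    finrank F ↥(L ⊔ (F ∙ v)) = finrank F ↥L + 1 ∧ v ∈ L ⊔ F ∙ v := by
  have hv0 : v ≠ 0 := fun h => hv (h ▸ L.zero_mem)
  have hinf : L ⊓ (F ∙ v) = ⊥ := by
    rw [eq_bot_iff]
    intro x hx
    rw [Submodule.mem_inf] at hx
    obtain ⟨hxL, hxv⟩ := hx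
    rw [Submodule.mem_span_singleton] at hxv
    obtain ⟨c, rfl⟩ := hxv
    rcases eq_or_ne c 0 with rfl | hc
    · simp
    · exfalso; apply hv
      have := L.smul_mem c⁻¹ hxL
      rwa [smul_smul, inv_mul_cancel₀ hc, one_smul] at this
  have h := Submodule.finrank_sup_add_finrank_inf_eq L (F ∙ v)
  rw [hinf, finrank_bot, finrank_span_singleton hv0] at h
  constructor
  · omega
  · exact SetLike.le_def.1 le_sup_right (Submodule.mem_span_singleton_self v)

omit [FiniteDimensional F V] in
lemma aux_card_filter_mem [Fintype V] (W : Submodule F V) [DecidablePred (· ∈ W)] :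
    (univ.filter (· ∈ W)).card = Fintype.card F ^ finrank F ↥W :=
  calc (univ.filter (· ∈ W)).card = Fintype.card {x // x ∈ W} :=
        (Fintype.card_subtype _).symm
   _ = Nat.card {x // x ∈ W} := (Nat.card_eq_fintype_card).symm
   _ = Fintype.card ↥W := Nat.card_eq_fintype_card
   _ = Fintype.card F ^ finrank F ↥W := card_eq_pow_finrank

open scoped Classical in
/-- The number of subspaces `W` with `L ≤ W ≤ S` covering `L`, in cross-multiplied form. -/
lemma aux_count_cover [Fintype V] [Fintype (Submodule F V)]
    (L S : Submodule F V) (hLS : L ≤ S) :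
    (univ.filter (fun W : Submodule F V =>
        finrank F ↥W = finrank F ↥L + 1 ∧ L ≤ W ∧ W ≤ S)).card
      * (Fintype.card F - 1)
      = Fintype.card F ^ (finrank F ↥S - finrank F ↥L) - 1 := by
  classical
  set q := Fintype.card F with hqdef
  set l := finrank F ↥L with hldef
  set d := finrank F ↥S with hddef
  have hq1 : 1 < q := Fintype.one_lt_card
  have hld : l ≤ d := Submodule.finrank_mono hLS
  set t := univ.filter (fun W : Submodule F V =>
      finrank F ↥W = l + 1 ∧ L ≤ W ∧ W ≤ S) with ht
  set sF : Finset V := univ.filter (fun v => v ∈ S ∧ v ∉ L) with hsF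
  have hmap : ∀ v ∈ sF, (L ⊔ (F ∙ v)) ∈ t := by
    intro v hv
    simp only [hsF, mem_filter, mem_univ, true_and] at hv
    obtain ⟨hvS, hvL⟩ := hv
    obtain ⟨hrank, hmem⟩ := aux_cover_props L hvL
    simp only [ht, mem_filter, mem_univ, true_and]
    exact ⟨hrank, le_sup_left,
      sup_le hLS ((Submodule.span_singleton_le_iff_mem v S).2 hvS)⟩
  have hcount := Finset.card_eq_sum_card_fiberwise hmap
  have hfiber : ∀ W ∈ t,
      (sF.filter (fun v => L ⊔ (F ∙ v) = W)).card = q ^ (l + 1) - q ^ l := by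
    intro W hW
    simp only [ht, mem_filter, mem_univ, true_and] at hW
    obtain ⟨hWrank, hLW, hWS⟩ := hW
    have heq : sF.filter (fun v => L ⊔ (F ∙ v) = W)
        = univ.filter (· ∈ W) \ univ.filter (· ∈ L) := by
      ext v
      simp only [hsF, filter_filter, mem_filter, mem_univ, true_and, mem_sdiff]
      constructor
      · rintro ⟨⟨hvS, hvL⟩, rfl⟩
        exact ⟨(aux_cover_props L hvL).2, hvL⟩
      · rintro ⟨hvW, hvL⟩
        refine ⟨⟨hWS hvW, hvL⟩, ?_⟩
        have hsub : L ⊔ (F ∙ v) ≤ W :=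
          sup_le hLW ((Submodule.span_singleton_le_iff_mem v W).2 hvW)
        exact Submodule.eq_of_le_of_finrank_le hsub
          (by rw [hWrank, (aux_cover_props L hvL).1])
    rw [heq, card_sdiff_of_subset (by
      intro v hv
      simp only [mem_filter, mem_univ, true_and] at hv ⊢
      exact hLW hv), aux_card_filter_mem, aux_card_filter_mem, hWrank]
  rw [Finset.sum_congr rfl hfiber, Finset.sum_const, smul_eq_mul] at hcount
  have hsFcard : sF.card = q ^ d - q ^ l := by
    have heq : sF = univ.filter (· ∈ S) \ univ.filter (· ∈ L) := by
      ext v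
      simp only [hsF, mem_filter, mem_univ, true_and, mem_sdiff]
    rw [heq, card_sdiff_of_subset (by
      intro v hv
      simp only [mem_filter, mem_univ, true_and] at hv ⊢
      exact hLS hv), aux_card_filter_mem, aux_card_filter_mem]
  rw [hsFcard] at hcount
  have hql : 0 < q ^ l := pow_pos (by omega) l
  have h1 : q ^ (l + 1) - q ^ l = q ^ l * (q - 1) := by
    rw [Nat.mul_sub, pow_succ, mul_one]
  have h2 : q ^ d - q ^ l = q ^ l * (q ^ (d - l) - 1) := by
    rw [Nat.mul_sub, mul_one, ← pow_add]
    congr 2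
    omega
  rw [h1, h2] at hcount
  have hfin : q ^ l * (q ^ (d - l) - 1) = q ^ l * (t.card * (q - 1)) := by
    rw [hcount]; ring
  exact (Nat.eq_of_mul_eq_mul_left hql hfin).symm

end Aux

/-- Count of the packets `F_P`: in a `k_r`-dim space over `F_q` with a fixed
`(l_r−1)`-dim subspace `L` and a fixed `(m_r+l_r+1)`-dim subspace `Q ⊇ L`,
the number of `(t_T−1)`-element sets `{V_1,…,V_{t_T−1}}` of `l_r`-dim subspaces,
each containing `L`, with `dim(Q + V_1 + ⋯ + V_{t_T−1}) = m_r + l_r + t_T`, equals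
`(q^{(t_T+2m_r+2)(t_T−1)/2}/(t_T−1)!) · ∏_{i=1}^{t_T−1} (q^{k_r−m_r−l_r−i} − 1)/(q−1)`
(stated in cross-multiplied form). -/
theorem count_packets (q mr lr tT kr : ℕ) (hq : IsPrimePow q)
    (hmr : 1 ≤ mr) (hlr : 1 ≤ lr) (htT : 1 ≤ tT) (hkr : mr + lr + tT ≤ kr)
    (F : Type*) [Field F] [Fintype F] (hF : Fintype.card F = q)
    (V : Type*) [AddCommGroup V] [Module F V] [FiniteDimensional F V]
    (hV : Module.finrank F V = kr)
    (L Q : Submodule F V) (hLQ : L ≤ Q)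
    (hL : Module.finrank F ↥L = lr - 1)
    (hQ : Module.finrank F ↥Q = mr + lr + 1) :
    Set.ncard {s : Finset (Submodule F V) | s.card = tT - 1 ∧
        (∀ W ∈ s, Module.finrank F ↥W = lr ∧ L ≤ W) ∧
        Module.finrank F ↥(Q ⊔ s.sup id) = mr + lr + tT}
      * Nat.factorial (tT - 1) * (q - 1) ^ (tT - 1)
      = q ^ ((tT + 2 * mr + 2) * (tT - 1) / 2)
        * ∏ i ∈ Finset.Icc 1 (tT - 1), (q ^ (kr - mr - lr - i) - 1) := by
  classical
  haveI : Finite V := Module.finite_of_finite F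
  haveI : Fintype V := Fintype.ofFinite V
  haveI : Finite (Submodule F V) :=
    Finite.of_injective (fun W : Submodule F V => (W : Set V)) SetLike.coe_injective
  haveI : Fintype (Submodule F V) := Fintype.ofFinite _
  have hq2 : 1 < q := by rw [← hF]; exact Fintype.one_lt_card
  have hlL : Module.finrank F ↥L + 1 = lr := by omega
  -- the main induction
  have key : ∀ n : ℕ, mr + lr + 1 + n ≤ kr →
      (univ.filter (fun s : Finset (Submodule F V) => s.card = n ∧
        (∀ W ∈ s, Module.finrank F ↥W = lr ∧ L ≤ W) ∧
        Module.finrank F ↥(Q ⊔ s.sup id) = mr + lr + 1 + n)).card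
        * n.factorial * (q - 1) ^ n
      = q ^ (∑ j ∈ Finset.Icc 1 n, (mr + 1 + j))
        * ∏ j ∈ Finset.Icc 1 n, (q ^ (kr - mr - lr - j) - 1) := by
    intro n
    induction n with
    | zero =>
      intro _
      have hone : (univ.filter (fun s : Finset (Submodule F V) => s.card = 0 ∧
          (∀ W ∈ s, Module.finrank F ↥W = lr ∧ L ≤ W) ∧
          Module.finrank F ↥(Q ⊔ s.sup id) = mr + lr + 1 + 0)) = {∅} := by
        ext s
        simp only [mem_filter, mem_univ, true_and, mem_singleton, Finset.card_eq_zero]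
        constructor
        · rintro ⟨rfl, _, _⟩; rfl
        · rintro rfl
          refine ⟨rfl, by simp, ?_⟩
          rw [Finset.sup_empty, sup_bot_eq, hQ]
      rw [hone]
      simp
    | succ n ih =>
      intro hn
      have ihn := ih (by omega)
      set An := univ.filter (fun s : Finset (Submodule F V) => s.card = n ∧
        (∀ W ∈ s, Module.finrank F ↥W = lr ∧ L ≤ W) ∧
        Module.finrank F ↥(Q ⊔ s.sup id) = mr + lr + 1 + n) with hAn
      set An1 := univ.filter (fun s : Finset (Submodule F V) => s.card = n + 1 ∧
        (∀ W ∈ s, Module.finrank F ↥W = lr ∧ L ≤ W) ∧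
        Module.finrank F ↥(Q ⊔ s.sup id) = mr + lr + 1 + (n + 1)) with hAn1
      -- the bijection between (s, W ∈ s) and (s', new W)
      have hbij : (An1.sigma fun s => s).card
          = (An.sigma fun s' => univ.filter (fun W : Submodule F V =>
              (Module.finrank F ↥W = lr ∧ L ≤ W) ∧ ¬ W ≤ Q ⊔ s'.sup id)).card := by
        apply Finset.card_bij'
          (i := fun p _ => (⟨p.1.erase p.2, p.2⟩ : Σ _ : Finset (Submodule F V), Submodule F V))
          (j := fun p _ => (⟨insert p.2 p.1, p.2⟩ : Σ _ : Finset (Submodule F V), Submodule F V))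
        · -- hi
          rintro ⟨s, W⟩ hp
          simp only [Finset.mem_sigma] at hp
          obtain ⟨hsmem, hWs⟩ := hp
          simp only [hAn1, mem_filter, mem_univ, true_and] at hsmem
          obtain ⟨hcard, hprops, hdim⟩ := hsmem
          have hWprop := hprops W hWs
          set s' := s.erase W with hs'
          set Y := Q ⊔ s'.sup id with hY
          have hsupeq : Q ⊔ s.sup id = Y ⊔ W := by
            conv_lhs => rw [← Finset.insert_erase hWs]
            rw [Finset.sup_insert]
            simp only [id_eq]
            rw [sup_comm W _, ← sup_assoc]
          have hLY : L ≤ Y := le_trans hLQ le_sup_left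
          have h1 : Module.finrank F ↥(Y ⊔ W) = mr + lr + 1 + (n + 1) := by
            rw [← hsupeq]; exact hdim
          have h2 : Module.finrank F ↥Y ≤ (mr + lr + 1) + n := by
            have := aux_sup_card_le L Q hLQ s'
              (fun W' hW' => by
                have := hprops W' (Finset.mem_of_mem_erase hW')
                exact ⟨by omega, this.2⟩)
            rw [hQ, Finset.card_erase_of_mem hWs, hcard] at this
            simpa using this
          have h3 : Module.finrank F ↥(Y ⊔ W) ≤ Module.finrank F ↥Y + 1 :=
            aux_sup_dim_le L Y W hLY hWprop.2 (by omega)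
          have hYdim : Module.finrank F ↥Y = mr + lr + 1 + n := by omega
          have hnle : ¬ W ≤ Y := by
            intro hle
            rw [sup_eq_left.2 hle] at h1
            omega
          simp only [Finset.mem_sigma]
          constructor
          · simp only [hAn, mem_filter, mem_univ, true_and]
            refine ⟨by rw [Finset.card_erase_of_mem hWs, hcard]; omega, ?_, hYdim⟩
            exact fun W' hW' => hprops W' (Finset.mem_of_mem_erase hW')
          · simp only [mem_filter, mem_univ, true_and]
            exact ⟨hWprop, hnle⟩
        · -- hj
          rintro ⟨s', W⟩ hp
          simp only [Finset.mem_sigma] at hp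
          obtain ⟨hsmem, hWmem⟩ := hp
          simp only [hAn, mem_filter, mem_univ, true_and] at hsmem
          obtain ⟨hcard, hprops, hdim⟩ := hsmem
          simp only [mem_filter, mem_univ, true_and] at hWmem
          obtain ⟨hWprop, hnle⟩ := hWmem
          have hWnotmem : W ∉ s' := by
            intro hmem
            exact hnle (le_trans (Finset.le_sup (f := id) hmem) le_sup_right)
          have hLY : L ≤ Q ⊔ s'.sup id := le_trans hLQ le_sup_left
          have hsupeq : Q ⊔ (insert W s').sup id = (Q ⊔ s'.sup id) ⊔ W := by
            rw [Finset.sup_insert]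
            simp only [id_eq]
            rw [sup_comm W _, ← sup_assoc]
          have hdim' : Module.finrank F ↥(Q ⊔ (insert W s').sup id)
              = mr + lr + 1 + (n + 1) := by
            rw [hsupeq, aux_sup_dim_eq L _ W hLY hWprop.2 (by omega) hnle, hdim]; omega
          simp only [Finset.mem_sigma]
          constructor
          · simp only [hAn1, mem_filter, mem_univ, true_and]
            refine ⟨by rw [Finset.card_insert_of_notMem hWnotmem, hcard], ?_, hdim'⟩
            intro W' hW'
            rcases Finset.mem_insert.1 hW' with rfl | hW'
            · exact hWprop
            · exact hprops W' hW'
          · exact Finset.mem_insert_self W s'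
        · -- left inverse
          rintro ⟨s, W⟩ hp
          simp only [Finset.mem_sigma] at hp
          exact congrArg (fun u => (⟨u, W⟩ : Σ _ : Finset (Submodule F V), Submodule F V))
            (Finset.insert_erase hp.2)
        · -- right inverse
          rintro ⟨s', W⟩ hp
          simp only [Finset.mem_sigma] at hp
          obtain ⟨hsmem, hWmem⟩ := hp
          simp only [mem_filter, mem_univ, true_and] at hWmem
          have hWnotmem : W ∉ s' := by
            intro hmem
            exact hWmem.2 (le_trans (Finset.le_sup (f := id) hmem) le_sup_right)
          exact congrArg (fun u => (⟨u, W⟩ : Σ _ : Finset (Submodule F V), Submodule F V))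
            (Finset.erase_insert hWnotmem)
      -- compute both sides of the bijection
      have hP1 : (An1.sigma fun s => s).card = An1.card * (n + 1) := by
        rw [Finset.card_sigma]
        rw [Finset.sum_congr rfl (fun s hs => by
          simp only [hAn1, mem_filter, mem_univ, true_and] at hs
          exact hs.1)]
        rw [Finset.sum_const, smul_eq_mul]
      -- the per-s' count, cross-multiplied
      have hgood : ∀ s' ∈ An,
          (univ.filter (fun W : Submodule F V =>
              (Module.finrank F ↥W = lr ∧ L ≤ W) ∧ ¬ W ≤ Q ⊔ s'.sup id)).card * (q - 1)
            = q ^ (mr + n + 2) * (q ^ (kr - mr - lr - (n + 1)) - 1) := by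
        intro s' hs'
        simp only [hAn, mem_filter, mem_univ, true_and] at hs'
        obtain ⟨hcard, hprops, hdim⟩ := hs'
        set Y := Q ⊔ s'.sup id with hY
        have hLY : L ≤ Y := le_trans hLQ le_sup_left
        set allW := univ.filter (fun W : Submodule F V =>
            Module.finrank F ↥W = Module.finrank F ↥L + 1 ∧ L ≤ W ∧ W ≤ ⊤) with hallW
        set subW := univ.filter (fun W : Submodule F V =>
            Module.finrank F ↥W = Module.finrank F ↥L + 1 ∧ L ≤ W ∧ W ≤ Y) with hsubW
        have hgoodeq : univ.filter (fun W : Submodule F V =>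
            (Module.finrank F ↥W = lr ∧ L ≤ W) ∧ ¬ W ≤ Y) = allW \ subW := by
          ext W
          simp only [hallW, hsubW, mem_filter, mem_univ, true_and, mem_sdiff, le_top,
            and_true]
          constructor
          · rintro ⟨⟨h1, h2⟩, h3⟩
            exact ⟨⟨by omega, h2⟩, fun hc => h3 hc.2.2⟩
          · rintro ⟨⟨h1, h2⟩, h3⟩
            exact ⟨⟨by omega, h2⟩, fun hc => h3 ⟨h1, h2, hc⟩⟩
        have hsubset : subW ⊆ allW := by
          intro W hW
          simp only [hallW, hsubW, mem_filter, mem_univ, true_and, le_top, and_true] at hW ⊢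
          exact ⟨hW.1, hW.2.1⟩
        have hallcard := aux_count_cover L (⊤ : Submodule F V) le_top
        have he1 : finrank F ↥(⊤ : Submodule F V) - finrank F ↥L = kr - lr + 1 := by
          rw [finrank_top, hV, hL]; omega
        rw [hF, he1] at hallcard
        have hsubcard := aux_count_cover L Y hLY
        have he2 : finrank F ↥Y - finrank F ↥L = mr + n + 2 := by
          rw [hdim, hL]; omega
        rw [hF, he2] at hsubcard
        rw [hgoodeq, card_sdiff_of_subset hsubset, Nat.sub_mul]
        -- coerce `allW`/`subW` filters: they are literally the filters in the lemmas
        rw [hallcard, hsubcard]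
        have hble : mr + n + 2 ≤ kr - lr + 1 := by omega
        have hpow1 : (1 : ℕ) ≤ q ^ (mr + n + 2) := Nat.one_le_pow _ _ (by omega)
        have hpowle : q ^ (mr + n + 2) ≤ q ^ (kr - lr + 1) :=
          Nat.pow_le_pow_right (by omega) hble
        have hsplit : q ^ (kr - lr + 1) - q ^ (mr + n + 2)
            = q ^ (mr + n + 2) * (q ^ (kr - mr - lr - (n + 1)) - 1) := by
          rw [Nat.mul_sub, mul_one, ← pow_add]
          congr 2
          omega
        omega
      have hP2 : (An.sigma fun s' => univ.filter (fun W : Submodule F V =>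
              (Module.finrank F ↥W = lr ∧ L ≤ W) ∧ ¬ W ≤ Q ⊔ s'.sup id)).card * (q - 1)
          = An.card * (q ^ (mr + n + 2) * (q ^ (kr - mr - lr - (n + 1)) - 1)) := by
        rw [Finset.card_sigma, Finset.sum_mul,
          Finset.sum_congr rfl hgood, Finset.sum_const, smul_eq_mul]
      have hrec : An1.card * (n + 1) * (q - 1)
          = An.card * (q ^ (mr + n + 2) * (q ^ (kr - mr - lr - (n + 1)) - 1)) := by
        rw [← hP1, hbij, hP2]
      -- assemble
      calc An1.card * (n + 1).factorial * (q - 1) ^ (n + 1)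
          = (An1.card * (n + 1) * (q - 1)) * (n.factorial * (q - 1) ^ n) := by
            rw [Nat.factorial_succ, pow_succ]; ring
        _ = (An.card * (q ^ (mr + n + 2) * (q ^ (kr - mr - lr - (n + 1)) - 1)))
              * (n.factorial * (q - 1) ^ n) := by rw [hrec]
        _ = (An.card * n.factorial * (q - 1) ^ n)
              * (q ^ (mr + n + 2) * (q ^ (kr - mr - lr - (n + 1)) - 1)) := by ring
        _ = (q ^ (∑ j ∈ Finset.Icc 1 n, (mr + 1 + j))
              * ∏ j ∈ Finset.Icc 1 n, (q ^ (kr - mr - lr - j) - 1))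
              * (q ^ (mr + n + 2) * (q ^ (kr - mr - lr - (n + 1)) - 1)) := by rw [ihn]
        _ = q ^ (∑ j ∈ Finset.Icc 1 (n + 1), (mr + 1 + j))
              * ∏ j ∈ Finset.Icc 1 (n + 1), (q ^ (kr - mr - lr - j) - 1) := by
            rw [Finset.sum_Icc_succ_top (by omega), Finset.prod_Icc_succ_top (by omega),
              pow_add q (∑ j ∈ Finset.Icc 1 n, (mr + 1 + j)) (mr + 1 + (n + 1))]
            have hexp2 : mr + n + 2 = mr + 1 + (n + 1) := by omega
            rw [hexp2]
            ring
  -- apply at n = tT - 1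
  have hkey := key (tT - 1) (by omega)
  have hsetfin : {s : Finset (Submodule F V) | s.card = tT - 1 ∧
      (∀ W ∈ s, Module.finrank F ↥W = lr ∧ L ≤ W) ∧
      Module.finrank F ↥(Q ⊔ s.sup id) = mr + lr + tT}
      = ↑(univ.filter (fun s : Finset (Submodule F V) => s.card = tT - 1 ∧
        (∀ W ∈ s, Module.finrank F ↥W = lr ∧ L ≤ W) ∧
        Module.finrank F ↥(Q ⊔ s.sup id) = mr + lr + 1 + (tT - 1))) := by
    have : mr + lr + 1 + (tT - 1) = mr + lr + tT := by omega
    rw [this]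
    ext s
    simp
  rw [hsetfin, Set.ncard_coe_finset, hkey]
  -- exponent arithmetic
  have hgauss : ∀ n : ℕ, (∑ j ∈ Finset.Icc 1 n, (mr + 1 + j)) * 2 = (n + 2 * mr + 3) * n := by
    intro n
    induction n with
    | zero => simp
    | succ n ihg =>
      rw [Finset.sum_Icc_succ_top (by omega), add_mul, ihg]
      ring
  have hexp : (tT + 2 * mr + 2) * (tT - 1) / 2 = ∑ j ∈ Finset.Icc 1 (tT - 1), (mr + 1 + j) := by
    have h1 : (tT + 2 * mr + 2) * (tT - 1) = ((tT - 1) + 2 * mr + 3) * (tT - 1) := by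
      have : tT + 2 * mr + 2 = (tT - 1) + 2 * mr + 3 := by omega
      rw [this]
    rw [h1, ← hgauss (tT - 1), Nat.mul_div_cancel _ (by omega)]
  rw [hexp]
end

section
/- Let q be a prime power and let a, f, b be positive integers with a ≥ f ≥ b. Then q^{(a−f−1)b} ≤ [a choose b]_q / [f choose b]_q ≤ q^{(a−f+1)b}, where the quotient is taken in the rationals (or reals) and q raised to a possibly negative integer exponent is interpreted accordingly. -/
private lemma gb_factor_lower (q n k : ℕ) (hq : (2:ℚ) ≤ (q:ℚ)) (hn : 1 ≤ n) :
    (q:ℚ) ^ ((k:ℤ) - 1) ≤ ((q:ℚ) ^ (k + n) - 1) / ((q:ℚ) ^ n - 1) := by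
  have hq0 : (0:ℚ) < q := by linarith
  have hq1 : (1:ℚ) < q := by linarith
  have hd : (0:ℚ) < (q:ℚ) ^ n - 1 := by
    have : (1:ℚ) < (q:ℚ) ^ n := one_lt_pow₀ hq1 (by omega)
    linarith
  rw [le_div_iff₀ hd, zpow_sub₀ hq0.ne', zpow_natCast, zpow_one,
    div_mul_eq_mul_div, div_le_iff₀ hq0]
  have h1 : (q:ℚ) ≤ (q:ℚ) ^ (k + n) := le_self_pow₀ hq1.le (by omega)
  have h2 : (0:ℚ) ≤ (q:ℚ) ^ k := by positivity
  have h3 : (q:ℚ) ^ (k + n) = (q:ℚ) ^ k * (q:ℚ) ^ n := pow_add _ _ _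
  nlinarith [h1, h2, h3, hq]

private lemma gb_factor_upper (q n k : ℕ) (hq : (2:ℚ) ≤ (q:ℚ)) (hn : 1 ≤ n) :
    ((q:ℚ) ^ (k + n) - 1) / ((q:ℚ) ^ n - 1) ≤ (q:ℚ) ^ ((k:ℤ) + 1) := by
  have hq0 : (0:ℚ) < q := by linarith
  have hq1 : (1:ℚ) < q := by linarith
  have hd : (0:ℚ) < (q:ℚ) ^ n - 1 := by
    have : (1:ℚ) < (q:ℚ) ^ n := one_lt_pow₀ hq1 (by omega)
    linarith
  rw [div_le_iff₀ hd, zpow_add₀ hq0.ne', zpow_natCast, zpow_one]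
  have h1 : (q:ℚ) ^ (k + 1) ≤ (q:ℚ) ^ (k + n) := pow_le_pow_right₀ hq1.le (by omega)
  have h3 : (q:ℚ) ^ (k + n) = (q:ℚ) ^ k * (q:ℚ) ^ n := pow_add _ _ _
  have h4 : (q:ℚ) ^ (k + 1) = (q:ℚ) ^ k * q := pow_succ _ _
  have h5 : (0:ℚ) < (q:ℚ) ^ (k + n) := by positivity
  nlinarith [h1, h3, h4, h5, hq]

/-- The Gaussian binomial coefficient
`[a choose b]_q = ((q^a − 1)(q^{a−1} − 1)⋯(q^{a−b+1} − 1)) / ((q^b − 1)⋯(q − 1))`,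
as a rational number. -/
def gaussBinom (q a b : ℕ) : ℚ :=
  (∏ i ∈ Finset.range b, ((q : ℚ) ^ (a - i) - 1)) /
    (∏ i ∈ Finset.range b, ((q : ℚ) ^ (b - i) - 1))

/-- For a prime power `q` and `a ≥ f ≥ b ≥ 1`:
`q^{(a−f−1)b} ≤ [a choose b]_q / [f choose b]_q ≤ q^{(a−f+1)b}`,
with integer (possibly negative) exponents interpreted in `ℚ`. -/
theorem gaussBinom_ratio_bounds (q a f b : ℕ) (hq : IsPrimePow q)
    (hb : 1 ≤ b) (hfb : b ≤ f) (haf : f ≤ a) :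
    (q : ℚ) ^ (((a : ℤ) - f - 1) * b) ≤ gaussBinom q a b / gaussBinom q f b ∧
      gaussBinom q a b / gaussBinom q f b ≤ (q : ℚ) ^ (((a : ℤ) - f + 1) * b) := by
  have hq2 : 2 ≤ q := hq.two_le
  have hqQ : (2:ℚ) ≤ (q:ℚ) := by exact_mod_cast hq2
  have hq0 : (0:ℚ) < q := by linarith
  have hq1 : (1:ℚ) < q := by linarith
  have hpos : ∀ m : ℕ, 1 ≤ m → (0:ℚ) < (q:ℚ) ^ m - 1 := fun m hm => by
    have : (1:ℚ) < (q:ℚ) ^ m := one_lt_pow₀ hq1 (by omega)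
    linarith
  have hD : (0:ℚ) < ∏ i ∈ Finset.range b, ((q : ℚ) ^ (b - i) - 1) :=
    Finset.prod_pos fun i hi => hpos _ (by simp at hi; omega)
  have hNf : (0:ℚ) < ∏ i ∈ Finset.range b, ((q : ℚ) ^ (f - i) - 1) :=
    Finset.prod_pos fun i hi => hpos _ (by simp at hi; omega)
  have hratio : gaussBinom q a b / gaussBinom q f b =
      ∏ i ∈ Finset.range b, (((q : ℚ) ^ (a - i) - 1) / ((q : ℚ) ^ (f - i) - 1)) := by
    rw [gaussBinom, gaussBinom, div_div_div_cancel_right₀ hD.ne' _ _,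
      Finset.prod_div_distrib]
  rw [hratio]
  have hzb : ∀ z : ℤ, (q:ℚ) ^ (z * b) = ∏ _i ∈ Finset.range b, (q:ℚ) ^ z := by
    intro z
    rw [Finset.prod_const, Finset.card_range, zpow_mul, zpow_natCast]
  constructor
  · rw [hzb]
    apply Finset.prod_le_prod
    · intro i _; positivity
    · intro i hi
      simp only [Finset.mem_range] at hi
      have hai : a - i = (a - f) + (f - i) := by omega
      have hz : (a:ℤ) - f - 1 = ((a - f : ℕ) : ℤ) - 1 := by omega
      rw [hai, hz]
      exact gb_factor_lower q (f - i) (a - f) hqQ (by omega)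
  · rw [hzb]
    apply Finset.prod_le_prod
    · intro i hi
      simp only [Finset.mem_range] at hi
      have := hpos (a - i) (by omega)
      have := hpos (f - i) (by omega)
      positivity
    · intro i hi
      simp only [Finset.mem_range] at hi
      have hai : a - i = (a - f) + (f - i) := by omega
      have hz : (a:ℤ) - f + 1 = ((a - f : ℕ) : ℤ) + 1 := by omega
      rw [hai, hz]
      exact gb_factor_upper q (f - i) (a - f) hqQ (by omega)
end
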